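/- arXiv:2603.29556 — 4 statements merged into one kernel-verified Lean document; each statement's English description precedes it below -/
import Mathlib

section
/- Let φ : M_n(ℂ) → A be a linear map into a C*-algebra A. Then φ is completely positive if and only if its Choi matrix Choi(φ) := ∑_{i,j} e_{ij} ⊗ φ(e_{ij}) ∈ M_n(A) is positive. -/
open Matrix ComplexOrder
open scoped Matrix.Norms.L2Operator

variable {A : Type*} [NormedRing A] [StarRing A] [CStarRing A] [NormedAlgebra ℂ A]
  [StarModule ℂ A] [CompleteSpace A]

/-- Positivity of an element of `M_k(B)` for a complex star algebra `B`:
`M ≥ 0` iff `M = bᴴ * b` for some `b`. -/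
def PosIn {k : ℕ} {B : Type*} [Ring B] [StarRing B]
    (M : Matrix (Fin k) (Fin k) B) : Prop :=
  ∃ b : Matrix (Fin k) (Fin k) B, M = b.conjTranspose * b

set_option linter.unusedSectionVars false
set_option maxHeartbeats 1000000

section CSMdev

variable {B : Type*} [CStarAlgebra B] [PartialOrder B] [StarOrderedRing B] {k : ℕ}

namespace CSM

lemma exists_star_mul_self_sum {C : Type*} [CStarAlgebra C] [PartialOrder C]
    [StarOrderedRing C] {S : Type*} [Fintype S] (R : S → C) :
    ∃ d : C, (∑ s, star (R s) * R s) = star d * d := by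
  have h0 : (0 : C) ≤ ∑ s, star (R s) * R s :=
    Finset.sum_nonneg fun s _ => star_mul_self_nonneg _
  refine ⟨CFC.sqrt (∑ s, star (R s) * R s), ?_⟩
  rw [(IsSelfAdjoint.of_nonneg (CFC.sqrt_nonneg _)).star_eq,
    CFC.sqrt_mul_sqrt_self _ h0]

lemma exists_conjTranspose_mul_self {S : Type*} [Fintype S] (W : Matrix S (Fin k) B) :
    ∃ d : Matrix (Fin k) (Fin k) B, Wᴴ * W = dᴴ * d := by
  rcases Nat.eq_zero_or_pos k with hk | hk
  · subst hk
    exact ⟨0, by ext i j; exact i.elim0⟩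
  · set p0 : Fin k := ⟨0, hk⟩
    set R' : S → Matrix (Fin k) (Fin k) B :=
      fun s => Matrix.of (fun p q => if p = p0 then W s q else 0) with hR'
    have hM : Wᴴ * W = ∑ s : S, (R' s)ᴴ * (R' s) := by
      ext i j
      rw [Matrix.mul_apply, Matrix.sum_apply]
      have : ∀ s : S, ((R' s)ᴴ * R' s) i j = star (W s i) * W s j := by
        intro s
        rw [Matrix.mul_apply]
        simp [hR', Matrix.conjTranspose_apply, apply_ite (star : B → B), ite_mul, mul_ite]
      simp only [this, Matrix.conjTranspose_apply]
    obtain ⟨d, hd⟩ := exists_star_mul_self_sum (fun s => CStarMatrix.ofMatrix (R' s))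
    refine ⟨CStarMatrix.ofMatrix.symm d, ?_⟩
    rw [hM]
    exact hd

end CSM

end CSMdev

/-- `φ : Mₙ(ℂ) → A` is completely positive (all amplifications
`Id_{M_k} ⊗ φ : M_k(Mₙ(ℂ)) → M_k(A)` preserve positivity) iff its Choi matrix
`∑ᵢⱼ eᵢⱼ ⊗ φ(eᵢⱼ) ∈ Mₙ(A)` is positive. -/
theorem stmt1 (n : ℕ) (φ : Matrix (Fin n) (Fin n) ℂ →ₗ[ℂ] A) :
    (∀ (k : ℕ) (M : Matrix (Fin k) (Fin k) (Matrix (Fin n) (Fin n) ℂ)),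
      PosIn M → PosIn (M.map φ)) ↔
    PosIn (fun i j => φ (Matrix.single i j 1) : Matrix (Fin n) (Fin n) A) := by
  letI : CStarAlgebra A :=
    { ‹NormedRing A›, ‹StarRing A›, ‹CStarRing A›, ‹NormedAlgebra ℂ A›,
      ‹StarModule ℂ A›, ‹CompleteSpace A› with }
  letI : PartialOrder A := CStarAlgebra.spectralOrder A
  letI : StarOrderedRing A := CStarAlgebra.spectralOrderedRing A
  have hφ : ∀ x : Matrix (Fin n) (Fin n) ℂ,
      φ x = ∑ i, ∑ j, x i j • φ (Matrix.single i j 1) := by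
    intro x
    conv_lhs => rw [Matrix.matrix_eq_sum_single x]
    rw [map_sum]
    refine Finset.sum_congr rfl fun i _ => ?_
    rw [map_sum]
    refine Finset.sum_congr rfl fun j _ => ?_
    rw [show Matrix.single i j (x i j) = x i j • Matrix.single i j 1 by
      rw [Matrix.smul_single, smul_eq_mul, mul_one], _root_.map_smul]
  constructor
  · intro h
    rcases Nat.eq_zero_or_pos n with hn | hn
    · subst hn
      exact ⟨0, by ext i j; exact i.elim0⟩
    · set i0 : Fin n := ⟨0, hn⟩
      set C : Matrix (Fin n) (Fin n) (Matrix (Fin n) (Fin n) ℂ) :=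
        fun i j => Matrix.single i j 1 with hCdef
      have hC : PosIn C := by
        refine ⟨fun p q => if p = i0 then Matrix.single i0 q 1 else 0, ?_⟩
        ext i j : 1
        erw [Matrix.mul_apply]
        have hsb : (Matrix.single i0 i (1:ℂ))ᴴ = Matrix.single i i0 1 := by
          ext a c
          simp [Matrix.single, Matrix.conjTranspose_apply, and_comm]
        simp only [Matrix.conjTranspose_apply, apply_ite (star : Matrix (Fin n) (Fin n) ℂ → _),
          star_zero, ite_mul, mul_ite, zero_mul, mul_zero]
        rw [Finset.sum_ite_eq' Finset.univ i0]
        simp only [Finset.mem_univ, if_true, Matrix.star_eq_conjTranspose, hsb,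
          Matrix.single_mul_single_same, one_mul, hCdef]
        erw [Matrix.conjTranspose_apply]
        simp [Matrix.star_eq_conjTranspose, hsb, Matrix.single_mul_single_same]
      exact h n C hC
  · rintro ⟨b, hb⟩ k M ⟨N, rfl⟩
    have hchoi : ∀ i j, φ (Matrix.single i j 1) = ∑ l, star (b l i) * b l j := by
      intro i j
      have := congrFun (congrFun hb i) j
      simpa [Matrix.mul_apply, Matrix.conjTranspose_apply] using this
    set W : Matrix (Fin k × Fin n × Fin n) (Fin k) A :=
      fun s p => ∑ j, (N s.1 p s.2.1 j) • b s.2.2 j with hW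
    obtain ⟨d, hd⟩ := CSM.exists_conjTranspose_mul_self (B := A) W
    refine ⟨d, ?_⟩
    rw [← hd]
    ext p q
    rw [Matrix.map_apply, hφ]
    have hx : ∀ i j, ((Nᴴ * N) p q) i j = ∑ r, ∑ m, star (N r p m i) * N r q m j := by
      intro i j
      rw [Matrix.mul_apply, Matrix.sum_apply]
      refine Finset.sum_congr rfl fun r _ => ?_
      rw [Matrix.mul_apply]
      simp [Matrix.conjTranspose_apply]
    have hws : ∀ s : Fin k × Fin n × Fin n,
        star (W s p) * W s q
          = ∑ i, ∑ j, (star (N s.1 p s.2.1 i) * N s.1 q s.2.1 j) •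
              (star (b s.2.2 i) * b s.2.2 j) := by
      intro s
      rw [hW]
      show star (∑ i, (N s.1 p s.2.1 i) • b s.2.2 i) * (∑ j, (N s.1 q s.2.1 j) • b s.2.2 j) = _
      rw [star_sum, Finset.sum_mul_sum]
      refine Finset.sum_congr rfl fun i _ => Finset.sum_congr rfl fun j _ => ?_
      rw [star_smul, smul_mul_smul_comm]
    calc ∑ i, ∑ j, ((Nᴴ * N) p q) i j • φ (Matrix.single i j 1)
        = ∑ ij : Fin n × Fin n, ∑ s : Fin k × Fin n × Fin n,
            (star (N s.1 p s.2.1 ij.1) * N s.1 q s.2.1 ij.2) •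
              (star (b s.2.2 ij.1) * b s.2.2 ij.2) := by
          rw [Fintype.sum_prod_type]
          refine Finset.sum_congr rfl fun i _ => Finset.sum_congr rfl fun j _ => ?_
          rw [hx i j, hchoi i j]
          simp only [Finset.sum_smul, Finset.smul_sum, Fintype.sum_prod_type]
          rw [Finset.sum_comm]
          exact Finset.sum_congr rfl fun r _ => Finset.sum_comm
      _ = ∑ s : Fin k × Fin n × Fin n, ∑ ij : Fin n × Fin n,
            (star (N s.1 p s.2.1 ij.1) * N s.1 q s.2.1 ij.2) •
              (star (b s.2.2 ij.1) * b s.2.2 ij.2) := Finset.sum_comm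
      _ = ∑ s : Fin k × Fin n × Fin n, star (W s p) * W s q := by
          refine Finset.sum_congr rfl fun s _ => ?_
          rw [hws s, Fintype.sum_prod_type]
      _ = (Wᴴ * W) p q := by
          rw [Matrix.mul_apply]
          simp [Matrix.conjTranspose_apply]
end

section
/- Let φ : A → M_n(ℂ) be a linear map from a C*-algebra A. Then φ is completely positive if and only if the linear functional φ̂ on M_n(A) defined by φ̂([a_{ij}]) = ∑_{i,j} φ(a_{ij})_{ij} is positive. -/
open Matrix ComplexOrder

variable {A : Type*} [NormedRing A] [StarRing A] [CStarRing A] [NormedAlgebra ℂ A]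
  [StarModule ℂ A] [CompleteSpace A]

lemma compRE_conjTranspose {k n : ℕ} (M : Matrix (Fin k) (Fin k) (Matrix (Fin n) (Fin n) ℂ)) :
    Matrix.compRingEquiv (Fin k) (Fin n) ℂ Mᴴ =
      (Matrix.compRingEquiv (Fin k) (Fin n) ℂ M)ᴴ := by
  ext ⟨i, ki⟩ ⟨j, kj⟩
  simp [Matrix.conjTranspose_apply]

lemma posIn_iff_posSemidef {k n : ℕ} (M : Matrix (Fin k) (Fin k) (Matrix (Fin n) (Fin n) ℂ)) :
    PosIn M ↔ (Matrix.compRingEquiv (Fin k) (Fin n) ℂ M).PosSemidef := by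
  rw [show ∀ A : Matrix (Fin k × Fin n) (Fin k × Fin n) ℂ, A.PosSemidef ↔
      ∃ B : Matrix (Fin k × Fin n) (Fin k × Fin n) ℂ, A = Bᴴ * B from fun A => by
    open scoped MatrixOrder in
    exact ⟨fun hA => by
      simpa [star_eq_conjTranspose] using CStarAlgebra.nonneg_iff_eq_star_mul_self.mp hA.nonneg,
      fun ⟨B, hB⟩ => hB ▸ posSemidef_conjTranspose_mul_self B⟩]
  constructor
  · rintro ⟨b, rfl⟩
    exact ⟨Matrix.compRingEquiv (Fin k) (Fin n) ℂ b,
      by rw [_root_.map_mul, compRE_conjTranspose]⟩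
  · rintro ⟨B, hB⟩
    refine ⟨(Matrix.compRingEquiv (Fin k) (Fin n) ℂ).symm B, ?_⟩
    apply (Matrix.compRingEquiv (Fin k) (Fin n) ℂ).injective
    rw [hB, _root_.map_mul, compRE_conjTranspose, RingEquiv.apply_symm_apply]

lemma isHermitian_of_nonneg {m : Type*} [Fintype m] [DecidableEq m] {M : Matrix m m ℂ}
    (h : ∀ x : m → ℂ, 0 ≤ dotProduct (star x) (M *ᵥ x)) : M.IsHermitian := by
  rw [Matrix.isHermitian_iff_isSymmetric, LinearMap.isSymmetric_iff_inner_map_self_real]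
  intro v
  obtain ⟨x, rfl⟩ := (WithLp.equiv 2 (m → ℂ)).symm.surjective v
  show (starRingEnd ℂ) (dotProduct x (star (M *ᵥ x))) = dotProduct x (star (M *ᵥ x))
  rw [dotProduct_comm]
  have him : (dotProduct (star x) (M *ᵥ x)).im = 0 := ((Complex.le_def.mp (h x)).2).symm
  have key : dotProduct (star (M *ᵥ x)) x
      = (starRingEnd ℂ) (dotProduct (star x) (M *ᵥ x)) := by
    simp [dotProduct, map_sum, mul_comm]
  rw [key, Complex.conj_conj]
  exact (Complex.conj_eq_iff_im.mpr him).symm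

lemma reorder {k n : ℕ} (F : Fin k → Fin n → Fin n → Fin k → Fin k → ℂ) :
    ∑ r, ∑ i, ∑ s, ∑ j, ∑ t, F t i j r s = ∑ t, ∑ i, ∑ j, ∑ r, ∑ s, F t i j r s := by
  have h1 : ∑ z : Fin k × Fin n × Fin k × Fin n × Fin k,
      F z.2.2.2.2 z.2.1 z.2.2.2.1 z.1 z.2.2.1 = ∑ r, ∑ i, ∑ s, ∑ j, ∑ t, F t i j r s := by
    simp only [Fintype.sum_prod_type]
  have h2 : ∑ z : Fin k × Fin n × Fin n × Fin k × Fin k,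
      F z.1 z.2.1 z.2.2.1 z.2.2.2.1 z.2.2.2.2 = ∑ t, ∑ i, ∑ j, ∑ r, ∑ s, F t i j r s := by
    simp only [Fintype.sum_prod_type]
  rw [← h1, ← h2]
  exact Fintype.sum_equiv
    ⟨fun z => (z.2.2.2.2, z.2.1, z.2.2.2.1, z.1, z.2.2.1),
     fun w => (w.2.2.2.1, w.2.1, w.2.2.2.2, w.2.2.1, w.1),
     by rintro ⟨a,b,c,d,e⟩; rfl, by rintro ⟨a,b,c,d,e⟩; rfl⟩ _ _ (fun z => rfl)

/-- a linear map `φ : A → Mₙ(ℂ)` is completely positive iff the functional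
`φ̂ : Mₙ(A) → ℂ`, `φ̂([aᵢⱼ]) = ∑ᵢⱼ φ(aᵢⱼ)ᵢⱼ`, is positive (nonnegative on positive elements,
where `0 ≤ z` refers to the complex order). -/
theorem stmt2 (n : ℕ) (φ : A →ₗ[ℂ] Matrix (Fin n) (Fin n) ℂ) :
    (∀ (k : ℕ) (M : Matrix (Fin k) (Fin k) A), PosIn M → PosIn (M.map φ)) ↔
    (∀ M : Matrix (Fin n) (Fin n) A, PosIn M →
      0 ≤ ∑ i : Fin n, ∑ j : Fin n, φ (M i j) i j) := by
  constructor
  · intro cp M hM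
    have hQ := (posIn_iff_posSemidef (M.map φ)).mp (cp n M hM)
    have h2 := (Matrix.posSemidef_iff_dotProduct_mulVec.mp hQ).2 (fun p => if p.1 = p.2 then 1 else 0)
    refine le_trans h2 (le_of_eq ?_)
    simp [dotProduct, Matrix.mulVec, Fintype.sum_prod_type, apply_ite (starRingEnd ℂ),
      Finset.sum_ite_eq, Finset.sum_ite_eq', Matrix.map_apply]
  · intro h k P hP
    rw [posIn_iff_posSemidef]
    have key : ∀ x : Fin k × Fin n → ℂ,
        0 ≤ dotProduct (star x)
          ((Matrix.compRingEquiv (Fin k) (Fin n) ℂ) (P.map φ) *ᵥ x) := by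
      intro x
      obtain ⟨c, rfl⟩ := hP
      rcases Nat.eq_zero_or_pos n with hn | hn
      · subst hn
        simp [dotProduct]
      haveI : NeZero n := ⟨hn.ne'⟩
      set u : Fin k → Fin n → A := fun t j => ∑ s, x (s, j) • c t s with hu
      set v : Fin k → Matrix (Fin n) (Fin n) A :=
        fun t => Matrix.of (fun i j => if i = 0 then u t j else 0) with hv
      have hnn : 0 ≤ ∑ t : Fin k, ∑ i, ∑ j, φ (((v t)ᴴ * v t) i j) i j :=
        Finset.sum_nonneg fun t _ => h _ ⟨v t, rfl⟩
      refine le_trans hnn (le_of_eq ?_)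
      -- both sides equal the canonical 5-fold sum
      have hvv : ∀ t i j, ((v t)ᴴ * v t) i j
          = ∑ r, ∑ s, ((starRingEnd ℂ) (x (r, i)) * x (s, j)) • (star (c t r) * c t s) := by
        intro t i j
        rw [Matrix.mul_apply]
        have : ∀ m : Fin n, (v t)ᴴ i m * v t m j
            = if m = 0 then star (u t i) * u t j else 0 := by
          intro m
          by_cases hm : m = 0 <;>
            simp [hv, Matrix.conjTranspose_apply, hm]
        rw [Finset.sum_congr rfl fun m _ => this m, Finset.sum_ite_eq' Finset.univ (0 : Fin n)]
        simp only [Finset.mem_univ, if_true, hu, star_sum, star_smul, Finset.sum_mul,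
          Finset.mul_sum, smul_mul_assoc, mul_smul_comm, smul_smul]
        simp only [Complex.star_def, Finset.smul_sum, smul_smul]
        rw [Finset.sum_comm]
        exact Finset.sum_congr rfl fun r _ => Finset.sum_congr rfl fun s _ => by
          rw [mul_comm]
      calc ∑ t : Fin k, ∑ i, ∑ j, φ (((v t)ᴴ * v t) i j) i j
          = ∑ t, ∑ i, ∑ j, ∑ r, ∑ s,
              (starRingEnd ℂ) (x (r, i)) * x (s, j) * φ (star (c t r) * c t s) i j := by
            refine Finset.sum_congr rfl fun t _ => Finset.sum_congr rfl fun i _ =>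
              Finset.sum_congr rfl fun j _ => ?_
            rw [hvv t i j]
            simp [map_sum, Matrix.sum_apply]
        _ = ∑ r, ∑ i, ∑ s, ∑ j, ∑ t,
              (starRingEnd ℂ) (x (r, i)) * x (s, j) * φ (star (c t r) * c t s) i j :=
            (reorder _).symm
        _ = dotProduct (star x)
              ((Matrix.compRingEquiv (Fin k) (Fin n) ℂ) ((cᴴ * c).map φ) *ᵥ x) := by
            rw [dotProduct]
            rw [Fintype.sum_prod_type]
            refine Finset.sum_congr rfl fun r _ => Finset.sum_congr rfl fun i _ => ?_
            rw [Matrix.mulVec, dotProduct, Fintype.sum_prod_type, Finset.mul_sum]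
            refine Finset.sum_congr rfl fun s _ => ?_
            rw [Finset.mul_sum]
            refine Finset.sum_congr rfl fun j _ => ?_
            have : ((Matrix.compRingEquiv (Fin k) (Fin n) ℂ) ((cᴴ * c).map φ)) (r, i) (s, j)
                = ∑ t, φ (star (c t r) * c t s) i j := by
              simp [Matrix.mul_apply, Matrix.map_apply, map_sum, Matrix.sum_apply,
                Matrix.conjTranspose_apply]
            rw [this, Finset.sum_mul, Finset.mul_sum]
            refine Finset.sum_congr rfl fun t _ => ?_
            simp [Pi.star_apply, Complex.star_def]
            ring
    exact Matrix.posSemidef_iff_dotProduct_mulVec.mpr ⟨isHermitian_of_nonneg key, key⟩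
end

section
/- For any bounded linear map φ : A → M_m(ℂ) from a C*-algebra A, ‖φ‖_cb ≤ m · ‖φ‖. -/
open Matrix
open scoped Matrix.Norms.L2Operator

variable {A : Type*} [NormedRing A] [StarRing A] [CStarRing A] [NormedAlgebra ℂ A]
  [StarModule ℂ A] [CompleteSpace A] [PartialOrder A] [StarOrderedRing A]

/-- The canonical C*-norm of a matrix over a C*-algebra `A` (the norm of the corresponding
operator on the Hilbert `A`-module `A^k`). -/
noncomputable def matNorm {k : ℕ} (M : Matrix (Fin k) (Fin k) A) : ℝ :=
  sSup {c | ∃ x y : Fin k → A,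
    (∑ i, star (x i) * x i) ≤ 1 ∧ (∑ j, star (y j) * y j) ≤ 1 ∧
    c = ‖∑ i, ∑ j, star (x i) * M i j * y j‖}

/-- The `k`-th amplification `Id_{M_k} ⊗ φ : M_k(A) → M_k(M_m(ℂ))` of `φ : A → M_m(ℂ)`. -/
noncomputable def amp {m : ℕ} (φ : A →ₗ[ℂ] Matrix (Fin m) (Fin m) ℂ) (k : ℕ)
    (M : Matrix (Fin k) (Fin k) A) : Matrix (Fin k × Fin m) (Fin k × Fin m) ℂ :=
  fun p q => φ (M p.1 q.1) p.2 q.2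

lemma euclid_coord_le {ι 𝕜 : Type*} [RCLike 𝕜] [Fintype ι] (w : EuclideanSpace 𝕜 ι) (i : ι) :
    ‖w i‖ ≤ ‖w‖ := by
  rw [EuclideanSpace.norm_eq]
  calc ‖w i‖ = Real.sqrt (‖w i‖ ^ 2) := (Real.sqrt_sq (norm_nonneg _)).symm
    _ ≤ _ := Real.sqrt_le_sqrt <| Finset.single_le_sum (f := fun j => ‖w j‖^2)
        (fun j _ => sq_nonneg _) (Finset.mem_univ i)

lemma entry_le_l2 {m : ℕ} (B : Matrix (Fin m) (Fin m) ℂ) (s t : Fin m) : ‖B s t‖ ≤ ‖B‖ := by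
  have h := B.l2_opNorm_mulVec (EuclideanSpace.single t 1)
  have hmv : B *ᵥ (EuclideanSpace.single t 1) = fun i => B i t := by
    funext i
    simp [Matrix.mulVec, dotProduct, EuclideanSpace.single_apply]
  rw [hmv, EuclideanSpace.norm_single] at h
  rw [norm_one, mul_one] at h
  exact le_trans (euclid_coord_le ((EuclideanSpace.equiv (Fin m) ℂ).symm fun i => B i t) s) h

lemma norm_le_one_of_sum_le {k : ℕ} {x : Fin k → A}
    (hx : (∑ i, star (x i) * x i) ≤ 1) (i : Fin k) : ‖x i‖ ≤ 1 := by
  letI : CStarAlgebra A := { }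
  rcases subsingleton_or_nontrivial A with h | h
  · simp [Subsingleton.elim (x i) 0]
  have h0 : ∀ j, (0:A) ≤ star (x j) * x j := fun j => star_mul_self_nonneg _
  have hle : star (x i) * x i ≤ 1 :=
    le_trans (Finset.single_le_sum (fun j _ => h0 j) (Finset.mem_univ i)) hx
  have hn : ‖star (x i) * x i‖ ≤ ‖(1:A)‖ :=
    CStarAlgebra.norm_le_norm_of_nonneg_of_le (h0 i) hle
  rw [CStarRing.norm_one, CStarRing.norm_star_mul_self] at hn
  nlinarith [norm_nonneg (x i)]

lemma matNorm_bddAbove {k : ℕ} (M : Matrix (Fin k) (Fin k) A) :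
    BddAbove {c | ∃ x y : Fin k → A,
      (∑ i, star (x i) * x i) ≤ 1 ∧ (∑ j, star (y j) * y j) ≤ 1 ∧
      c = ‖∑ i, ∑ j, star (x i) * M i j * y j‖} := by
  refine ⟨∑ i, ∑ j, ‖M i j‖, ?_⟩
  rintro c ⟨x, y, hx, hy, rfl⟩
  refine le_trans (norm_sum_le _ _) (Finset.sum_le_sum fun i _ => ?_)
  refine le_trans (norm_sum_le _ _) (Finset.sum_le_sum fun j _ => ?_)
  calc ‖star (x i) * M i j * y j‖ ≤ ‖star (x i) * M i j‖ * ‖y j‖ := norm_mul_le _ _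
    _ ≤ ‖star (x i)‖ * ‖M i j‖ * ‖y j‖ :=
        mul_le_mul_of_nonneg_right (norm_mul_le _ _) (norm_nonneg _)
    _ ≤ 1 * ‖M i j‖ * 1 := by
        gcongr
        · exact (norm_star _).le.trans (norm_le_one_of_sum_le hx i)
        · exact norm_le_one_of_sum_le hy j
    _ = ‖M i j‖ := by ring

lemma matNorm_nonneg {k : ℕ} (M : Matrix (Fin k) (Fin k) A) : 0 ≤ matNorm M := by
  refine le_csSup (matNorm_bddAbove M) ?_
  refine ⟨0, 0, by simp, by simp, by simp⟩

lemma matNorm_key {k : ℕ} (M : Matrix (Fin k) (Fin k) A) (ξ η : Fin k → ℂ) :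
    ‖∑ i, ∑ j, (starRingEnd ℂ (ξ i) * η j) • M i j‖ ≤
      matNorm M * Real.sqrt (∑ i, ‖ξ i‖ ^ 2) * Real.sqrt (∑ j, ‖η j‖ ^ 2) := by
  by_cases hza : ∑ i, ‖ξ i‖ ^ 2 = 0
  · have hz : ∀ i, ξ i = 0 := by
      intro i
      have := (Finset.sum_eq_zero_iff_of_nonneg (fun i _ => sq_nonneg ‖ξ i‖)).mp hza i
        (Finset.mem_univ i)
      simpa using this
    simp [hz, hza]
  by_cases hzb : ∑ j, ‖η j‖ ^ 2 = 0
  · have hz : ∀ j, η j = 0 := by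
      intro j
      have := (Finset.sum_eq_zero_iff_of_nonneg (fun j _ => sq_nonneg ‖η j‖)).mp hzb j
        (Finset.mem_univ j)
      simpa using this
    simp [hz, hzb]
  have hSa : 0 < ∑ i, ‖ξ i‖ ^ 2 :=
    lt_of_le_of_ne (Finset.sum_nonneg fun _ _ => sq_nonneg _) (Ne.symm hza)
  have hSb : 0 < ∑ j, ‖η j‖ ^ 2 :=
    lt_of_le_of_ne (Finset.sum_nonneg fun _ _ => sq_nonneg _) (Ne.symm hzb)
  set a := Real.sqrt (∑ i, ‖ξ i‖ ^ 2) with ha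
  set b := Real.sqrt (∑ j, ‖η j‖ ^ 2) with hb
  have hap : 0 < a := Real.sqrt_pos.mpr hSa
  have hbp : 0 < b := Real.sqrt_pos.mpr hSb
  have haC : ((a:ℂ)) ≠ 0 := by exact_mod_cast hap.ne'
  have hbC : ((b:ℂ)) ≠ 0 := by exact_mod_cast hbp.ne'
  set x : Fin k → A := fun i => (ξ i / (a:ℂ)) • 1 with hxdef
  set y : Fin k → A := fun j => (η j / (b:ℂ)) • 1 with hydef
  have hcomp : ∀ (c : ℂ), star (c • (1:A)) * (c • (1:A)) = ((‖c‖^2 : ℝ):ℂ) • (1:A) := by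
    intro c
    rw [star_smul, star_one, smul_mul_smul_comm, one_mul, RCLike.star_def, RCLike.conj_mul]
    norm_cast
  have hnormdiv : ∀ (c : ℂ) (r : ℝ), 0 < r → ‖c / (r:ℂ)‖^2 = ‖c‖^2 / r^2 := by
    intro c r hr
    rw [norm_div, div_pow, Complex.norm_real, Real.norm_of_nonneg hr.le]
  have hxsum : ∑ i, star (x i) * x i = 1 := by
    simp only [hxdef, hcomp]
    rw [← Finset.sum_smul, ← Complex.ofReal_sum]
    have : ∑ i, ‖ξ i / (a:ℂ)‖ ^ 2 = 1 := by
      rw [Finset.sum_congr rfl fun i _ => hnormdiv (ξ i) a hap, ← Finset.sum_div, ha,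
        Real.sq_sqrt hSa.le, div_self hSa.ne']
    rw [this]
    simp
  have hysum : ∑ j, star (y j) * y j = 1 := by
    simp only [hydef, hcomp]
    rw [← Finset.sum_smul, ← Complex.ofReal_sum]
    have : ∑ j, ‖η j / (b:ℂ)‖ ^ 2 = 1 := by
      rw [Finset.sum_congr rfl fun j _ => hnormdiv (η j) b hbp, ← Finset.sum_div, hb,
        Real.sq_sqrt hSb.le, div_self hSb.ne']
    rw [this]
    simp
  have hmem : ‖∑ i, ∑ j, star (x i) * M i j * y j‖ ≤ matNorm M :=
    le_csSup (matNorm_bddAbove M) ⟨x, y, hxsum.le, hysum.le, rfl⟩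
  have hrel : ∑ i, ∑ j, (starRingEnd ℂ (ξ i) * η j) • M i j
      = ((a*b : ℝ):ℂ) • ∑ i, ∑ j, star (x i) * M i j * y j := by
    rw [Finset.smul_sum]
    refine Finset.sum_congr rfl fun i _ => ?_
    rw [Finset.smul_sum]
    refine Finset.sum_congr rfl fun j _ => ?_
    simp only [hxdef, hydef, star_smul, star_one, smul_mul_assoc, mul_smul_comm, one_mul,
      mul_one, smul_smul]
    congr 1
    rw [RCLike.star_def, map_div₀, Complex.conj_ofReal]
    push_cast
    field_simp
  rw [hrel, norm_smul]
  have : ‖((a*b:ℝ):ℂ)‖ = a * b := by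
    rw [Complex.norm_real, Real.norm_of_nonneg (mul_pos hap hbp).le]
  rw [this]
  refine le_trans (mul_le_mul_of_nonneg_left hmem (mul_nonneg hap.le hbp.le)) (le_of_eq ?_)
  ring

/-- for a bounded linear map `φ : A → M_m(ℂ)` from a C*-algebra,
`‖φ‖_cb ≤ m ⬝ ‖φ‖`: if `‖φ‖ ≤ C` then every amplification has norm at most `m ⬝ C`. -/
theorem stmt5 (m : ℕ) (φ : A →ₗ[ℂ] Matrix (Fin m) (Fin m) ℂ)
    (C : ℝ) (hC : 0 ≤ C) (hφ : ∀ a : A, ‖φ a‖ ≤ C * ‖a‖) :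
    ∀ (k : ℕ) (M : Matrix (Fin k) (Fin k) A),
      ‖amp φ k M‖ ≤ (m : ℝ) * C * matNorm M := by
  intro k M
  have hKnn : 0 ≤ (m:ℝ) * C * matNorm M :=
    mul_nonneg (mul_nonneg (Nat.cast_nonneg m) hC) (matNorm_nonneg M)
  set N := amp φ k M with hN
  rw [Matrix.l2_opNorm_def]
  refine ContinuousLinearMap.opNorm_le_bound _ hKnn fun η => ?_
  set w : EuclideanSpace ℂ (Fin k × Fin m) :=
    (Matrix.toEuclideanLin.trans LinearMap.toContinuousLinearMap N) η with hw
  have hw' : ∀ p, w p = ∑ q, N p q * η q := fun p => rfl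
  have hinner : ∀ ξ : EuclideanSpace ℂ (Fin k × Fin m),
      ‖(inner ℂ ξ w : ℂ)‖ ≤ ((m:ℝ) * C * matNorm M) * (‖ξ‖ * ‖η‖) := by
    intro ξ
    set c : Fin m → ℝ := fun s => Real.sqrt (∑ i, ‖ξ (i, s)‖ ^ 2) with hc
    set d : Fin m → ℝ := fun t => Real.sqrt (∑ j, ‖η (j, t)‖ ^ 2) with hd
    have hip : (inner ℂ ξ w : ℂ) = ∑ p : Fin k × Fin m, (starRingEnd ℂ) (ξ p) * ∑ q, N p q * η q := by
      rw [PiLp.inner_apply]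
      simp only [RCLike.inner_apply]
      exact Finset.sum_congr rfl fun p _ => by rw [hw' p, mul_comm]
    have hφb : ∀ s t : Fin m,
        (φ (∑ i, ∑ j, ((starRingEnd ℂ) (ξ (i, s)) * η (j, t)) • M i j)) s t
          = ∑ i, ∑ j, (starRingEnd ℂ) (ξ (i, s)) * η (j, t) * (φ (M i j)) s t := by
      intro s t
      rw [map_sum, Matrix.sum_apply]
      refine Finset.sum_congr rfl fun i _ => ?_
      rw [map_sum, Matrix.sum_apply]
      refine Finset.sum_congr rfl fun j _ => ?_
      rw [LinearMap.map_smul, Matrix.smul_apply, smul_eq_mul]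
    have hterm : ∀ s t : Fin m,
        ‖(φ (∑ i, ∑ j, ((starRingEnd ℂ) (ξ (i, s)) * η (j, t)) • M i j)) s t‖
          ≤ C * (matNorm M * c s * d t) := by
      intro s t
      refine le_trans (entry_le_l2 _ s t) (le_trans (hφ _) ?_)
      exact mul_le_mul_of_nonneg_left
        (matNorm_key M (fun i => ξ (i, s)) (fun j => η (j, t))) hC
    have heq : (∑ p : Fin k × Fin m, (starRingEnd ℂ) (ξ p) * ∑ q, N p q * η q)
        = ∑ s : Fin m, ∑ t : Fin m,
            (φ (∑ i, ∑ j, ((starRingEnd ℂ) (ξ (i, s)) * η (j, t)) • M i j)) s t := by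
      simp only [hφb, Finset.mul_sum]
      rw [← Fintype.sum_prod_type
        (f := fun z : (Fin k × Fin m) × (Fin k × Fin m) =>
          (starRingEnd ℂ) (ξ z.1) * (N z.1 z.2 * η z.2))]
      rw [Fintype.sum_equiv
        (⟨fun z => ((z.1.2, z.2.2), (z.1.1, z.2.1)), fun z => ((z.2.1, z.1.1), (z.2.2, z.1.2)),
            fun z => rfl, fun z => rfl⟩ :
          ((Fin k × Fin m) × (Fin k × Fin m)) ≃ ((Fin m × Fin m) × (Fin k × Fin k)))
        _
        (fun z : (Fin m × Fin m) × (Fin k × Fin k) =>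
          (starRingEnd ℂ) (ξ (z.2.1, z.1.1)) * η (z.2.2, z.1.2)
            * (φ (M z.2.1 z.2.2)) z.1.1 z.1.2)
        (fun z => by
          simp only [hN, amp, Equiv.coe_fn_mk]
          ring)]
      simp only [Fintype.sum_prod_type]
    have hcsum : ∑ s, c s ≤ Real.sqrt m * ‖ξ‖ := by
      have h1 : (∑ s, c s)^2 ≤ (m:ℝ) * ∑ s, (c s)^2 := by
        simpa using sq_sum_le_card_mul_sum_sq (s := Finset.univ) (f := c)
      have h2 : ∑ s, (c s)^2 = ‖ξ‖^2 := by
        calc ∑ s, (c s)^2 = ∑ s : Fin m, ∑ i : Fin k, ‖ξ (i, s)‖^2 :=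
              Finset.sum_congr rfl fun s _ =>
                Real.sq_sqrt (Finset.sum_nonneg fun _ _ => sq_nonneg _)
          _ = ∑ p : Fin k × Fin m, ‖ξ p‖^2 := by
              rw [Finset.sum_comm]
              exact (Fintype.sum_prod_type (f := fun p : Fin k × Fin m => ‖ξ p‖^2)).symm
          _ = ‖ξ‖^2 := by
              rw [EuclideanSpace.norm_eq,
                Real.sq_sqrt (Finset.sum_nonneg fun _ _ => sq_nonneg _)]
      have h3 : 0 ≤ ∑ s, c s := Finset.sum_nonneg fun s _ => Real.sqrt_nonneg _
      calc ∑ s, c s = Real.sqrt ((∑ s, c s)^2) := (Real.sqrt_sq h3).symm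
        _ ≤ Real.sqrt ((m:ℝ) * ‖ξ‖^2) := Real.sqrt_le_sqrt (h2 ▸ h1)
        _ = Real.sqrt m * ‖ξ‖ := by
            rw [Real.sqrt_mul (Nat.cast_nonneg m), Real.sqrt_sq (norm_nonneg _)]
    have hdsum : ∑ t, d t ≤ Real.sqrt m * ‖η‖ := by
      have h1 : (∑ t, d t)^2 ≤ (m:ℝ) * ∑ t, (d t)^2 := by
        simpa using sq_sum_le_card_mul_sum_sq (s := Finset.univ) (f := d)
      have h2 : ∑ t, (d t)^2 = ‖η‖^2 := by
        calc ∑ t, (d t)^2 = ∑ t : Fin m, ∑ j : Fin k, ‖η (j, t)‖^2 :=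
              Finset.sum_congr rfl fun t _ =>
                Real.sq_sqrt (Finset.sum_nonneg fun _ _ => sq_nonneg _)
          _ = ∑ p : Fin k × Fin m, ‖η p‖^2 := by
              rw [Finset.sum_comm]
              exact (Fintype.sum_prod_type (f := fun p : Fin k × Fin m => ‖η p‖^2)).symm
          _ = ‖η‖^2 := by
              rw [EuclideanSpace.norm_eq,
                Real.sq_sqrt (Finset.sum_nonneg fun _ _ => sq_nonneg _)]
      have h3 : 0 ≤ ∑ t, d t := Finset.sum_nonneg fun t _ => Real.sqrt_nonneg _
      calc ∑ t, d t = Real.sqrt ((∑ t, d t)^2) := (Real.sqrt_sq h3).symm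
        _ ≤ Real.sqrt ((m:ℝ) * ‖η‖^2) := Real.sqrt_le_sqrt (h2 ▸ h1)
        _ = Real.sqrt m * ‖η‖ := by
            rw [Real.sqrt_mul (Nat.cast_nonneg m), Real.sqrt_sq (norm_nonneg _)]
    have hCK : 0 ≤ C * matNorm M := mul_nonneg hC (matNorm_nonneg M)
    have hm : Real.sqrt (m:ℝ) * Real.sqrt (m:ℝ) = (m:ℝ) := Real.mul_self_sqrt (Nat.cast_nonneg m)
    calc ‖(inner ℂ ξ w : ℂ)‖
        = ‖∑ s : Fin m, ∑ t : Fin m,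
            (φ (∑ i, ∑ j, ((starRingEnd ℂ) (ξ (i, s)) * η (j, t)) • M i j)) s t‖ := by
          rw [hip, heq]
      _ ≤ ∑ s : Fin m, ∑ t : Fin m,
            ‖(φ (∑ i, ∑ j, ((starRingEnd ℂ) (ξ (i, s)) * η (j, t)) • M i j)) s t‖ :=
          le_trans (norm_sum_le _ _) (Finset.sum_le_sum fun s _ => norm_sum_le _ _)
      _ ≤ ∑ s : Fin m, ∑ t : Fin m, C * (matNorm M * c s * d t) :=
          Finset.sum_le_sum fun s _ => Finset.sum_le_sum fun t _ => hterm s t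
      _ = (C * matNorm M) * ((∑ s, c s) * (∑ t, d t)) := by
          rw [Finset.sum_mul_sum, Finset.mul_sum]
          refine Finset.sum_congr rfl fun s _ => ?_
          rw [Finset.mul_sum]
          exact Finset.sum_congr rfl fun t _ => by ring
      _ ≤ (C * matNorm M) * ((Real.sqrt m * ‖ξ‖) * (Real.sqrt m * ‖η‖)) := by
          refine mul_le_mul_of_nonneg_left ?_ hCK
          exact mul_le_mul hcsum hdsum (Finset.sum_nonneg fun t _ => Real.sqrt_nonneg _)
            (mul_nonneg (Real.sqrt_nonneg _) (norm_nonneg _))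
      _ = (Real.sqrt m * Real.sqrt m) * (C * matNorm M) * (‖ξ‖ * ‖η‖) := by ring
      _ = (m:ℝ) * C * matNorm M * (‖ξ‖ * ‖η‖) := by rw [hm]; ring
  by_cases hw0 : ‖w‖ = 0
  · calc ‖w‖ = 0 := hw0
      _ ≤ _ := mul_nonneg hKnn (norm_nonneg _)
  · have hwpos : 0 < ‖w‖ := lt_of_le_of_ne (norm_nonneg _) (Ne.symm hw0)
    have h2 := hinner w
    have hsq : ‖(inner ℂ w w : ℂ)‖ = ‖w‖ * ‖w‖ := by
      rw [inner_self_eq_norm_sq_to_K (𝕜 := ℂ)]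
      rw [norm_pow, RCLike.norm_ofReal, abs_norm]
      ring
    rw [hsq] at h2
    nlinarith
end

section
/- Horodecki criterion: an element x ∈ (M_n(ℂ) ⊗ M_m(ℂ))_+ is separable if and only if (Id ⊗ φ)(x) ≥ 0 for every positive linear map φ : M_n(ℂ) → M_m(ℂ). -/
open Matrix ComplexOrder Kronecker
open scoped Matrix.Norms.L2Operator

/-- The separable elements of `Mₙ(ℂ) ⊗ M_m(ℂ)`: the closed cone generated by `P ⊗ Q`
with `P, Q` positive semidefinite. -/
def Separable (n m : ℕ) : Set (Matrix (Fin n × Fin m) (Fin n × Fin m) ℂ) :=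
  closure {X | ∃ (N : ℕ) (P : Fin N → Matrix (Fin n) (Fin n) ℂ)
    (Q : Fin N → Matrix (Fin m) (Fin m) ℂ),
    (∀ t, (P t).PosSemidef) ∧ (∀ t, (Q t).PosSemidef) ∧ X = ∑ t, P t ⊗ₖ Q t}

/-- Application of `φ : Mₙ(ℂ) → M_m(ℂ)` to the first tensor leg of `x ∈ Mₙ ⊗ M_m`,
giving `(φ ⊗ Id)(x) ∈ M_m ⊗ M_m`; on elementary tensors `A ⊗ B ↦ φ(A) ⊗ B`. -/
noncomputable def applyFst {n m : ℕ} (φ : Matrix (Fin n) (Fin n) ℂ →ₗ[ℂ] Matrix (Fin m) (Fin m) ℂ)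
    (x : Matrix (Fin n × Fin m) (Fin n × Fin m) ℂ) :
    Matrix (Fin m × Fin m) (Fin m × Fin m) ℂ :=
  fun p q => ∑ i : Fin n, ∑ j : Fin n,
    x (i, p.2) (j, q.2) * φ (Matrix.single i j 1) p.1 q.1

/-! ### Auxiliary material -/

/-- The (not yet closed) separable cone. -/
def SepCone (n m : ℕ) : Set (Matrix (Fin n × Fin m) (Fin n × Fin m) ℂ) :=
  {X | ∃ (N : ℕ) (P : Fin N → Matrix (Fin n) (Fin n) ℂ)
    (Q : Fin N → Matrix (Fin m) (Fin m) ℂ),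
    (∀ t, (P t).PosSemidef) ∧ (∀ t, (Q t).PosSemidef) ∧ X = ∑ t, P t ⊗ₖ Q t}

lemma Separable_eq (n m : ℕ) : Separable n m = closure (SepCone n m) := rfl

section Aux

lemma kron_conjTranspose {l o l' o' : Type*} (A : Matrix l l' ℂ) (B : Matrix o o' ℂ) :
    (A ⊗ₖ B)ᴴ = Aᴴ ⊗ₖ Bᴴ := by
  ext p q
  simp [conjTranspose_apply, kroneckerMap_apply]

lemma psd_kron {n m : ℕ} {A : Matrix (Fin n) (Fin n) ℂ} {B : Matrix (Fin m) (Fin m) ℂ}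
    (hA : A.PosSemidef) (hB : B.PosSemidef) : (A ⊗ₖ B).PosSemidef := by
  exact hA.kronecker hB

lemma isClosed_psd {k : Type*} [Fintype k] [DecidableEq k] :
    IsClosed {M : Matrix k k ℂ | M.PosSemidef} := by
  have hent : ∀ p q : k, Continuous fun M : Matrix k k ℂ => M p q := fun p q => by
    exact LinearMap.continuous_of_finiteDimensional (Matrix.entryLinearMap ℂ ℂ p q)
  have hquad : ∀ v : k → ℂ, Continuous fun M : Matrix k k ℂ => star v ⬝ᵥ M *ᵥ v := by
    intro v
    let L : Matrix k k ℂ →ₗ[ℂ] ℂ :=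
      { toFun := fun M => star v ⬝ᵥ M *ᵥ v
        map_add' := fun M N => by simp [add_mulVec, dotProduct_add]
        map_smul' := fun c M => by simp [smul_mulVec, dotProduct_smul] }
    exact LinearMap.continuous_of_finiteDimensional L
  have hcone : IsClosed {z : ℂ | 0 ≤ z} := by
    have : {z : ℂ | 0 ≤ z} = {z : ℂ | 0 ≤ z.re} ∩ {z : ℂ | (0:ℝ) = z.im} := by
      ext z; simp [Complex.le_def, and_comm]
    rw [this]
    exact (isClosed_le continuous_const Complex.continuous_re).inter
      (isClosed_eq continuous_const Complex.continuous_im)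
  have : {M : Matrix k k ℂ | M.PosSemidef} =
      (⋂ p : k, ⋂ q : k, {M : Matrix k k ℂ | (starRingEnd ℂ) (M q p) = M p q}) ∩
      (⋂ v : k → ℂ, {M : Matrix k k ℂ | 0 ≤ star v ⬝ᵥ M *ᵥ v}) := by
    ext M
    simp only [Set.mem_inter_iff, Set.mem_iInter, Set.mem_setOf_eq]
    constructor
    · exact fun h => ⟨fun p q => congrFun (congrFun h.1 p) q, h.dotProduct_mulVec_nonneg⟩
    · rintro ⟨h1, h2⟩
      exact .of_dotProduct_mulVec_nonneg (Matrix.ext fun p q => h1 p q) h2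
  rw [this]
  refine IsClosed.inter (isClosed_iInter fun p => isClosed_iInter fun q =>
    isClosed_eq ((Complex.continuous_conj).comp (hent q p)) (hent p q)) ?_
  exact isClosed_iInter fun v => IsClosed.preimage (hquad v) hcone

lemma psd_real_smul {k : Type*} [Fintype k] {a : ℝ} (ha : 0 ≤ a)
    {P : Matrix k k ℂ} (hP : P.PosSemidef) : ((a:ℂ) • P).PosSemidef := by
  refine .of_dotProduct_mulVec_nonneg ?_ ?_
  · unfold Matrix.IsHermitian
    rw [conjTranspose_smul, hP.1, Complex.star_def, Complex.conj_ofReal]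
  · intro v
    have h := hP.dotProduct_mulVec_nonneg v
    have : star v ⬝ᵥ ((a:ℂ) • P) *ᵥ v = (a:ℂ) * (star v ⬝ᵥ P *ᵥ v) := by
      simp [smul_mulVec, dotProduct_smul]
    rw [this]
    exact mul_nonneg (by exact_mod_cast Complex.zero_le_real.mpr ha) h

lemma SepCone_zero (n m : ℕ) : (0 : Matrix (Fin n × Fin m) (Fin n × Fin m) ℂ) ∈ SepCone n m :=
  ⟨0, ![], ![], fun t => t.elim0, fun t => t.elim0, by simp⟩

lemma SepCone_add {n m : ℕ} {X Y : Matrix (Fin n × Fin m) (Fin n × Fin m) ℂ}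
    (hX : X ∈ SepCone n m) (hY : Y ∈ SepCone n m) : X + Y ∈ SepCone n m := by
  obtain ⟨N₁, P₁, Q₁, hP₁, hQ₁, rfl⟩ := hX
  obtain ⟨N₂, P₂, Q₂, hP₂, hQ₂, rfl⟩ := hY
  refine ⟨N₁ + N₂, Fin.append P₁ P₂, Fin.append Q₁ Q₂, ?_, ?_, ?_⟩
  · intro t
    refine Fin.addCases (fun i => ?_) (fun i => ?_) t
    · simpa [Fin.append_left] using hP₁ i
    · simpa [Fin.append_right] using hP₂ i
  · intro t
    refine Fin.addCases (fun i => ?_) (fun i => ?_) t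
    · simpa [Fin.append_left] using hQ₁ i
    · simpa [Fin.append_right] using hQ₂ i
  · rw [Fin.sum_univ_add]
    congr 1 <;> (apply Finset.sum_congr rfl; intro t _; simp [Fin.append_left, Fin.append_right])

lemma SepCone_smul {n m : ℕ} {a : ℝ} (ha : 0 ≤ a) {X : Matrix (Fin n × Fin m) (Fin n × Fin m) ℂ}
    (hX : X ∈ SepCone n m) : a • X ∈ SepCone n m := by
  obtain ⟨N, P, Q, hP, hQ, rfl⟩ := hX
  refine ⟨N, fun t => (a:ℂ) • P t, Q, fun t => psd_real_smul ha (hP t), hQ, ?_⟩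
  rw [Finset.smul_sum]
  apply Finset.sum_congr rfl
  intro t _
  rw [smul_kronecker]
  ext p q
  simp [Complex.real_smul]

lemma SepCone_convex (n m : ℕ) : Convex ℝ (SepCone n m) :=
  fun _ hX _ hY _ _ ha hb _ => SepCone_add (SepCone_smul ha hX) (SepCone_smul hb hY)

variable {n m : ℕ}

lemma applyFst_kron (φ : Matrix (Fin n) (Fin n) ℂ →ₗ[ℂ] Matrix (Fin m) (Fin m) ℂ)
    (P : Matrix (Fin n) (Fin n) ℂ) (Q : Matrix (Fin m) (Fin m) ℂ) :
    applyFst φ (P ⊗ₖ Q) = (φ P) ⊗ₖ Q := by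
  ext p q
  rw [kroneckerMap_apply]
  conv_rhs => rw [matrix_eq_sum_single P]
  rw [map_sum, Matrix.sum_apply, Finset.sum_mul]
  apply Finset.sum_congr rfl
  intro i _
  rw [map_sum, Matrix.sum_apply, Finset.sum_mul]
  apply Finset.sum_congr rfl
  intro j _
  have : Matrix.single i j (P i j) = P i j • Matrix.single i j 1 := by
    rw [smul_single, smul_eq_mul, mul_one]
  rw [this, _root_.map_smul]
  simp [applyFst, kroneckerMap_apply]
  ring

/-- `applyFst` as a linear map. -/
noncomputable def applyFstLM (φ : Matrix (Fin n) (Fin n) ℂ →ₗ[ℂ] Matrix (Fin m) (Fin m) ℂ) :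
    Matrix (Fin n × Fin m) (Fin n × Fin m) ℂ →ₗ[ℂ] Matrix (Fin m × Fin m) (Fin m × Fin m) ℂ where
  toFun := applyFst φ
  map_add' x y := by
    ext p q
    simp [applyFst, add_mul, Finset.sum_add_distrib]
  map_smul' c x := by
    ext p q
    simp [applyFst, Finset.mul_sum, mul_assoc]

lemma applyFst_continuous (φ : Matrix (Fin n) (Fin n) ℂ →ₗ[ℂ] Matrix (Fin m) (Fin m) ℂ) :
    Continuous (applyFst φ) :=
  LinearMap.continuous_of_finiteDimensional (applyFstLM φ)

/-! ### The forward direction -/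

lemma forward_dir {x : Matrix (Fin n × Fin m) (Fin n × Fin m) ℂ} (hx : x ∈ Separable n m)
    (φ : Matrix (Fin n) (Fin n) ℂ →ₗ[ℂ] Matrix (Fin m) (Fin m) ℂ)
    (hφ : ∀ M : Matrix (Fin n) (Fin n) ℂ, M.PosSemidef → (φ M).PosSemidef) :
    (applyFst φ x).PosSemidef := by
  rw [Separable_eq] at hx
  have hmaps : Set.MapsTo (applyFst φ) (SepCone n m) {M | M.PosSemidef} := by
    rintro X ⟨N, P, Q, hP, hQ, rfl⟩
    show Matrix.PosSemidef _
    have : applyFst φ (∑ t, P t ⊗ₖ Q t) = ∑ t, applyFst φ (P t ⊗ₖ Q t) :=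
      map_sum (applyFstLM φ) _ _
    rw [this]
    refine Finset.sum_induction _ _ (fun a b ha hb => ha.add hb) Matrix.PosSemidef.zero ?_
    intro t _
    rw [applyFst_kron]
    exact psd_kron (hφ _ (hP t)) (hQ t)
  have := map_mem_closure (applyFst_continuous φ) hx hmaps
  rwa [isClosed_psd.closure_eq] at this

/-! ### The separating functional and the associated positive map -/

lemma csmul_decomp (c : ℂ) {k : Type*} (M : Matrix k k ℂ) :
    c • M = c.re • M + c.im • (Complex.I • M) := by
  ext i j
  simp only [Matrix.smul_apply, Matrix.add_apply, smul_eq_mul, Complex.real_smul]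
  conv_lhs => rw [← Complex.re_add_im c]
  ring

variable (f : Matrix (Fin n × Fin m) (Fin n × Fin m) ℂ →L[ℝ] ℝ)

/-- The complex matrix representing the real functional `f`. -/
noncomputable def Dmat : Matrix (Fin n × Fin m) (Fin n × Fin m) ℂ := fun p q =>
  (f (Matrix.single p q 1) : ℂ) +
    Complex.I * (f (Complex.I • Matrix.single p q 1) : ℂ)

lemma Dmat_re (p q) : (Dmat f p q).re = f (Matrix.single p q 1) := by
  simp [Dmat]

lemma Dmat_im (p q) : (Dmat f p q).im = f (Complex.I • Matrix.single p q 1) := by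
  simp [Dmat]

/-- The hermitization of `Dmat f`. -/
noncomputable def Cmat : Matrix (Fin n × Fin m) (Fin n × Fin m) ℂ := fun p q =>
  (Dmat f p q + (starRingEnd ℂ) (Dmat f q p)) / 2

lemma Cmat_herm (p q) : (starRingEnd ℂ) (Cmat f q p) = Cmat f p q := by
  simp only [Cmat, map_div₀, map_add, RingHomCompTriple.comp_apply, RingHom.id_apply,
    starRingEnd_self_apply, map_ofNat]
  ring

lemma f_expand (X : Matrix (Fin n × Fin m) (Fin n × Fin m) ℂ) :
    (∑ p : Fin n × Fin m, ∑ q : Fin n × Fin m, (starRingEnd ℂ) (Dmat f p q) * X p q).re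
      = f X := by
  conv_rhs => rw [matrix_eq_sum_single X]
  rw [map_sum, Complex.re_sum]
  apply Finset.sum_congr rfl
  intro p _
  rw [map_sum, Complex.re_sum]
  apply Finset.sum_congr rfl
  intro q _
  have h1 : Matrix.single p q (X p q) = X p q • Matrix.single p q 1 := by
    rw [smul_single, smul_eq_mul, mul_one]
  rw [h1, csmul_decomp, map_add, _root_.map_smul, _root_.map_smul]
  simp only [smul_eq_mul]
  rw [Complex.mul_re]
  simp [Complex.conj_re, Complex.conj_im, Dmat_re, Dmat_im]
  ring

lemma f_eq_of_herm (X : Matrix (Fin n × Fin m) (Fin n × Fin m) ℂ) (hX : X.IsHermitian) :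
    (∑ p : Fin n × Fin m, ∑ q : Fin n × Fin m, (starRingEnd ℂ) (Cmat f p q) * X p q)
      = ((f X : ℝ) : ℂ) := by
  set T := ∑ p : Fin n × Fin m, ∑ q : Fin n × Fin m, (starRingEnd ℂ) (Dmat f p q) * X p q
    with hT
  have h1 : (∑ p : Fin n × Fin m, ∑ q : Fin n × Fin m,
      (starRingEnd ℂ) (Cmat f p q) * X p q) = (T + (starRingEnd ℂ) T) / 2 := by
    have hconjT : (starRingEnd ℂ) T
        = ∑ p : Fin n × Fin m, ∑ q : Fin n × Fin m, Dmat f q p * X p q := by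
      rw [hT, map_sum]
      rw [Finset.sum_comm]
      apply Finset.sum_congr rfl; intro p _
      rw [map_sum]
      apply Finset.sum_congr rfl; intro q _
      rw [_root_.map_mul, starRingEnd_self_apply]
      have : (starRingEnd ℂ) (X p q) = X q p := hX.apply q p
      rw [this]
    rw [hconjT, hT, ← Finset.sum_add_distrib, Finset.sum_div]
    apply Finset.sum_congr rfl; intro p _
    rw [← Finset.sum_add_distrib, Finset.sum_div]
    apply Finset.sum_congr rfl; intro q _
    simp only [Cmat, map_div₀, map_add, starRingEnd_self_apply, map_ofNat]
    ring
  rw [h1, Complex.add_conj, f_expand f X]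
  push_cast
  ring

/-- The positive map associated to the separating functional `f`. -/
noncomputable def phiMap : Matrix (Fin n) (Fin n) ℂ →ₗ[ℂ] Matrix (Fin m) (Fin m) ℂ where
  toFun A := Matrix.of fun k l =>
    -∑ i : Fin n, ∑ j : Fin n, A i j * (starRingEnd ℂ) (Cmat f (i, k) (j, l))
  map_add' A B := by
    ext k l
    simp [add_mul, Finset.sum_add_distrib]
    ring
  map_smul' c A := by
    ext k l
    simp [Finset.mul_sum, mul_assoc]

lemma phiMap_apply (A : Matrix (Fin n) (Fin n) ℂ) (k l : Fin m) :
    phiMap f A k l = -∑ i : Fin n, ∑ j : Fin n, A i j * (starRingEnd ℂ) (Cmat f (i, k) (j, l)) :=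
  rfl

lemma phiMap_std (i j : Fin n) (k l : Fin m) :
    phiMap f (Matrix.single i j 1) k l = -(starRingEnd ℂ) (Cmat f (i, k) (j, l)) := by
  rw [phiMap_apply, neg_inj]
  rw [Finset.sum_eq_single i, Finset.sum_eq_single j]
  · simp
  · intro b _ hb
    rw [Matrix.single_apply_of_ne i j 1 i b (fun h => hb h.2.symm), zero_mul]
  · simp
  · intro b _ hb
    apply Finset.sum_eq_zero
    intro c _
    rw [Matrix.single_apply_of_ne i j 1 b c (fun h => hb h.1.symm), zero_mul]
  · simp

lemma vv_psd {m : ℕ} (v : Fin m → ℂ) :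
    (Matrix.of fun k l => (starRingEnd ℂ) (v k) * v l : Matrix (Fin m) (Fin m) ℂ).PosSemidef := by
  refine .of_dotProduct_mulVec_nonneg ?_ ?_
  · ext k l
    simp only [conjTranspose_apply, of_apply, star_mul', RingHomCompTriple.comp_apply]
    simp [mul_comm]
  · intro u
    have : star u ⬝ᵥ ((Matrix.of fun k l => (starRingEnd ℂ) (v k) * v l) *ᵥ u)
        = (starRingEnd ℂ) (∑ l, v l * u l) * (∑ l, v l * u l) := by
      rw [map_sum, Finset.sum_mul_sum]
      simp only [dotProduct, Matrix.mulVec, dotProduct, Pi.star_apply, of_apply]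
      rw [Finset.sum_congr rfl]
      intro k _
      rw [Finset.mul_sum]
      apply Finset.sum_congr rfl
      intro l _
      simp only [_root_.map_mul, Complex.star_def]
      ring
    rw [this]
    exact star_mul_self_nonneg _

lemma sum4_comm {α β γ δ M : Type*} [AddCommMonoid M]
    [Fintype α] [Fintype β] [Fintype γ] [Fintype δ] (g : α → β → γ → δ → M) :
    ∑ a, ∑ b, ∑ c, ∑ d, g a b c d = ∑ b, ∑ d, ∑ a, ∑ c, g a b c d := by
  rw [Finset.sum_comm]
  apply Finset.sum_congr rfl
  intro b _
  have h1 : ∀ a : α, ∑ c : γ, ∑ d : δ, g a b c d = ∑ d : δ, ∑ c : γ, g a b c d :=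
    fun a => Finset.sum_comm
  rw [Finset.sum_congr rfl fun a _ => h1 a]
  exact Finset.sum_comm

lemma phiMap_herm {P : Matrix (Fin n) (Fin n) ℂ} (hP : P.PosSemidef) :
    (phiMap f P).IsHermitian := by
  ext k l
  rw [conjTranspose_apply, phiMap_apply, phiMap_apply]
  rw [star_neg, neg_inj]
  rw [Complex.star_def, map_sum]
  rw [Finset.sum_comm]
  apply Finset.sum_congr rfl
  intro i _
  rw [map_sum]
  apply Finset.sum_congr rfl
  intro j _
  rw [_root_.map_mul, starRingEnd_self_apply]
  have h1 : (starRingEnd ℂ) (P i j) = P j i := hP.1.apply j i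
  have h2 : Cmat f (i, l) (j, k) = (starRingEnd ℂ) (Cmat f (j, k) (i, l)) :=
    (Cmat_herm f (i, l) (j, k)).symm
  rw [h1, h2]

lemma phiMap_quad (P : Matrix (Fin n) (Fin n) ℂ) (v : Fin m → ℂ) :
    star v ⬝ᵥ (phiMap f P) *ᵥ v
      = -∑ p : Fin n × Fin m, ∑ q : Fin n × Fin m, (starRingEnd ℂ) (Cmat f p q) *
          (P ⊗ₖ (Matrix.of fun k l => (starRingEnd ℂ) (v k) * v l)) p q := by
  have hrhs : ∑ p : Fin n × Fin m, ∑ q : Fin n × Fin m, (starRingEnd ℂ) (Cmat f p q) *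
        (P ⊗ₖ (Matrix.of fun k l => (starRingEnd ℂ) (v k) * v l)) p q
      = ∑ i : Fin n, ∑ k : Fin m, ∑ j : Fin n, ∑ l : Fin m,
          (starRingEnd ℂ) (Cmat f (i, k) (j, l)) *
            (P i j * ((starRingEnd ℂ) (v k) * v l)) := by
    rw [Fintype.sum_prod_type]
    apply Finset.sum_congr rfl; intro i _
    apply Finset.sum_congr rfl; intro k _
    rw [Fintype.sum_prod_type]
    apply Finset.sum_congr rfl; intro j _
    apply Finset.sum_congr rfl; intro l _
    simp [Matrix.kroneckerMap_apply]
  rw [hrhs, sum4_comm (fun i k j l => (starRingEnd ℂ) (Cmat f (i, k) (j, l)) *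
      (P i j * ((starRingEnd ℂ) (v k) * v l)))]
  have hlhs : star v ⬝ᵥ (phiMap f P) *ᵥ v
      = ∑ k : Fin m, star (v k) * ∑ l : Fin m, phiMap f P k l * v l := rfl
  rw [hlhs, ← Finset.sum_neg_distrib]
  apply Finset.sum_congr rfl; intro k _
  rw [Finset.mul_sum, ← Finset.sum_neg_distrib]
  apply Finset.sum_congr rfl; intro l _
  rw [phiMap_apply, neg_mul, mul_neg, neg_inj]
  rw [Finset.sum_mul, Finset.mul_sum]
  apply Finset.sum_congr rfl; intro i _
  rw [Finset.sum_mul, Finset.mul_sum]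
  apply Finset.sum_congr rfl; intro j _
  simp only [Complex.star_def]
  ring

lemma phiMap_posMap (hneg : ∀ Y ∈ SepCone n m, f Y ≤ 0)
    {P : Matrix (Fin n) (Fin n) ℂ} (hP : P.PosSemidef) : (phiMap f P).PosSemidef := by
  refine .of_dotProduct_mulVec_nonneg (phiMap_herm f hP) fun v => ?_
  set Q : Matrix (Fin m) (Fin m) ℂ := Matrix.of fun k l => (starRingEnd ℂ) (v k) * v l with hQ
  have hQpsd : Q.PosSemidef := vv_psd v
  have hYmem : P ⊗ₖ Q ∈ SepCone n m := by
    refine ⟨1, ![P], ![Q], fun t => by simpa using hP, fun t => by simpa using hQpsd, by simp⟩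
  have hYherm : (P ⊗ₖ Q).IsHermitian := (psd_kron hP hQpsd).1
  rw [phiMap_quad f P v, f_eq_of_herm f _ hYherm]
  have h0 : -(((f (P ⊗ₖ Q) : ℝ)) : ℂ) = (((-(f (P ⊗ₖ Q)) : ℝ)) : ℂ) := by push_cast; ring
  rw [h0]
  exact Complex.zero_le_real.mpr (neg_nonneg.mpr (hneg _ hYmem))

lemma entangled_form (x : Matrix (Fin n × Fin m) (Fin n × Fin m) ℂ) (hxh : x.IsHermitian) :
    star (fun p : Fin m × Fin m => if p.1 = p.2 then (1:ℂ) else 0) ⬝ᵥ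
      (applyFst (phiMap f) x) *ᵥ (fun p : Fin m × Fin m => if p.1 = p.2 then (1:ℂ) else 0)
      = -((f x : ℝ) : ℂ) := by
  rw [← f_eq_of_herm f x hxh]
  have h1 : ∑ p : Fin n × Fin m, ∑ q : Fin n × Fin m, (starRingEnd ℂ) (Cmat f p q) * x p q
      = ∑ i : Fin n, ∑ k : Fin m, ∑ j : Fin n, ∑ l : Fin m,
          (starRingEnd ℂ) (Cmat f (i, k) (j, l)) * x (i, k) (j, l) := by
    rw [Fintype.sum_prod_type]
    apply Finset.sum_congr rfl; intro i _
    apply Finset.sum_congr rfl; intro k _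
    rw [Fintype.sum_prod_type]
  rw [h1, sum4_comm (fun i k j l =>
    (starRingEnd ℂ) (Cmat f (i, k) (j, l)) * x (i, k) (j, l))]
  have hL : star (fun p : Fin m × Fin m => if p.1 = p.2 then (1:ℂ) else 0) ⬝ᵥ
      (applyFst (phiMap f) x) *ᵥ (fun p : Fin m × Fin m => if p.1 = p.2 then (1:ℂ) else 0)
      = ∑ k : Fin m, ∑ l : Fin m, applyFst (phiMap f) x (k, k) (l, l) := by
    have hd : star (fun p : Fin m × Fin m => if p.1 = p.2 then (1:ℂ) else 0) ⬝ᵥ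
        (applyFst (phiMap f) x) *ᵥ (fun p : Fin m × Fin m => if p.1 = p.2 then (1:ℂ) else 0)
        = ∑ p : Fin m × Fin m, star (if p.1 = p.2 then (1:ℂ) else 0) *
            ∑ q : Fin m × Fin m, applyFst (phiMap f) x p q * (if q.1 = q.2 then (1:ℂ) else 0) :=
      rfl
    rw [hd, Fintype.sum_prod_type]
    apply Finset.sum_congr rfl; intro k _
    have hin : ∀ p : Fin m × Fin m,
        ∑ q : Fin m × Fin m, applyFst (phiMap f) x p q * (if q.1 = q.2 then (1:ℂ) else 0)
        = ∑ l : Fin m, applyFst (phiMap f) x p (l, l) := by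
      intro p
      rw [Fintype.sum_prod_type]
      apply Finset.sum_congr rfl; intro l _
      simp [Finset.sum_ite_eq]
    simp only [hin]
    simp [Finset.sum_ite_eq]
  rw [hL, ← Finset.sum_neg_distrib]
  apply Finset.sum_congr rfl; intro k _
  rw [← Finset.sum_neg_distrib]
  apply Finset.sum_congr rfl; intro l _
  have hA : applyFst (phiMap f) x (k, k) (l, l)
      = ∑ i : Fin n, ∑ j : Fin n, x (i, k) (j, l) *
          phiMap f (Matrix.single i j 1) k l := rfl
  rw [hA, ← Finset.sum_neg_distrib]
  apply Finset.sum_congr rfl; intro i _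
  rw [← Finset.sum_neg_distrib]
  apply Finset.sum_congr rfl; intro j _
  rw [phiMap_std]
  ring

end Aux

/-- Horodecki criterion: a positive `x ∈ Mₙ(ℂ) ⊗ M_m(ℂ)` is separable iff
applying any positive map `φ : Mₙ(ℂ) → M_m(ℂ)` to one tensor factor of `x` yields a
positive matrix. -/
theorem stmt12 (n m : ℕ) (x : Matrix (Fin n × Fin m) (Fin n × Fin m) ℂ)
    (hx : x.PosSemidef) :
    x ∈ Separable n m ↔
      ∀ φ : Matrix (Fin n) (Fin n) ℂ →ₗ[ℂ] Matrix (Fin m) (Fin m) ℂ,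
        (∀ M : Matrix (Fin n) (Fin n) ℂ, M.PosSemidef → (φ M).PosSemidef) →
        (applyFst φ x).PosSemidef := by
  constructor
  · intro hsep φ hφ
    exact forward_dir hsep φ hφ
  · intro h
    by_contra hns
    rw [Separable_eq] at hns
    obtain ⟨f, u, hfu, hux⟩ := geometric_hahn_banach_closed_point
      ((SepCone_convex n m).closure) isClosed_closure hns
    have hu0 : 0 < u := by
      have := hfu 0 (subset_closure (SepCone_zero n m))
      simpa using this
    have hneg : ∀ Y ∈ SepCone n m, f Y ≤ 0 := by
      intro Y hY
      by_contra hpos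
      push_neg at hpos
      have ht : (0:ℝ) ≤ u / f Y := le_of_lt (div_pos hu0 hpos)
      have h2 := hfu ((u / f Y) • Y) (subset_closure (SepCone_smul ht hY))
      rw [_root_.map_smul] at h2
      simp only [smul_eq_mul] at h2
      rw [div_mul_cancel₀ u (ne_of_gt hpos)] at h2
      exact lt_irrefl u h2
    have hfx : 0 < f x := lt_trans hu0 hux
    have hpsd := h (phiMap f) (fun M hM => phiMap_posMap f hneg hM)
    have hq := hpsd.dotProduct_mulVec_nonneg (fun p : Fin m × Fin m => if p.1 = p.2 then (1:ℂ) else 0)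
    rw [entangled_form f x hx.1] at hq
    rw [show -(((f x : ℝ)) : ℂ) = (((-(f x) : ℝ)) : ℂ) by push_cast; ring] at hq
    have := Complex.zero_le_real.mp hq
    linarith
end
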